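/- Let G be a digraph, H = G ⊠ K_2 the strong product, F_0 a rooted forest of H, and S the set of vertices u of G at which F_0 contains a vertical arc. If F is a uniformly random rooted forest of H conditioned to have the same G-projection as F_0, then the spins (σ_u)_{u∈S} of the vertical arcs of F are independent and each uniform on {0,1}. Equivalently: for every function σ : S → {0,1}, the number of rooted forests of H with the same G-projection as F_0 and with vertical arc spin σ_u at each u ∈ S is the same (namely |F_0's class| / 2^{|S|}). -/

import Mathlib

open scoped Classical
open Polynomial

noncomputable section

/-- A rooted (spanning) forest of the digraph with arc relation `A`:
every vertex has at most one outgoing arc (encoded by `f : V → Option V`),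
all arcs of the forest are arcs of the digraph, and there is no directed cycle. -/
def IsRootedForest {V : Type*} (A : V → V → Prop) (f : V → Option V) : Prop :=
  (∀ v w : V, f v = some w → A v w) ∧
  ∀ v : V, ¬ Relation.TransGen (fun a b : V => f a = some b) v v

/-- The number of components (= roots) of a rooted forest. -/
def numRoots {V : Type*} [Fintype V] (f : V → Option V) : ℕ :=
  (Finset.univ.filter fun v => f v = none).card

/-- The rooted-forest enumerator of a weighted digraph:
`∑_F t^(#components of F) ∏_{arcs (v,w) ∈ F} wgt v w`. -/
def forestEnum {V : Type*} [Fintype V] {R : Type*} [CommRing R]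
    (A : V → V → Prop) (wgt : V → V → R) (t : R) : R :=
  ∑ f ∈ Finset.univ.filter (fun f : V → Option V => IsRootedForest A f),
    ∏ v : V, (f v).elim t (wgt v)

/-- Arc relation of the `n`-dimensional hypercube on `{0,1}^n`:
an arc from `u` to `v` flips exactly one coordinate. -/
def cubeArc (n : ℕ) (u v : Fin n → Bool) : Prop :=
  ∃ i : Fin n, v = Function.update u i (!(u i))

/-- Weight of a hypercube arc: an arc of direction `i` and spin `ε`
(i.e. flipping coordinate `i` to the value `ε`) has weight `x i ε`. -/
def cubeWeight {R : Type*} [CommRing R] (n : ℕ) (x : Fin n → Bool → R)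
    (u v : Fin n → Bool) : R :=
  ∑ i : Fin n, if v = Function.update u i (!(u i)) then x i (v i) else 0

end

/-- Arc relation of the strong product `G ⊠ K₂` of a loopless digraph with arc
relation `A`: straight and diagonal arcs over the arcs of `G`, plus vertical arcs. -/
def strongArc {U : Type*} (A : U → U → Prop) (p q : U × Bool) : Prop :=
  A p.1 q.1 ∨ (p.1 = q.1 ∧ p.2 ≠ q.2)

open scoped Classical in
/-- Two rooted forests of `G ⊠ K₂` have the same `G`-projection: for every arc
`(u,v)` of `G` they contain the same number of straight `(u,v)`-arcs and the same
number of diagonal `(u,v)`-arcs, and they contain vertical arcs at the same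
vertices of `G`. -/
def SameProj {U : Type*} [Fintype U]
    (f g : U × Bool → Option (U × Bool)) : Prop :=
  (∀ u v : U, u ≠ v →
      (Finset.univ.filter fun e : Bool => f (u, e) = some (v, e)).card =
      (Finset.univ.filter fun e : Bool => g (u, e) = some (v, e)).card) ∧
  (∀ u v : U, u ≠ v →
      (Finset.univ.filter fun e : Bool => f (u, e) = some (v, !e)).card =
      (Finset.univ.filter fun e : Bool => g (u, e) = some (v, !e)).card) ∧
  (∀ u : U, (∃ e : Bool, f (u, e) = some (u, !e)) ↔ (∃ e : Bool, g (u, e) = some (u, !e)))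


open scoped Classical

noncomputable section MatrixForest
open Finset Matrix

set_option linter.unusedSectionVars false
variable {V : Type*} [Fintype V]

/-- step relation of a partial function -/
def pstep (f : V → Option V) : V → V → Prop := fun a b => f a = some b

def Acyc (f : V → Option V) : Prop := ∀ v : V, ¬ Relation.TransGen (pstep f) v v

def iterOpt (f : V → Option V) : ℕ → V → Option V
  | 0, p => some p
  | (n+1), p => (iterOpt f n p).bind f

lemma iterOpt_add (f : V → Option V) (a b : ℕ) (p : V) :
    iterOpt f (a + b) p = (iterOpt f a p).bind (iterOpt f b) := by
  induction b with
  | zero => simp [iterOpt]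
  | succ n ih =>
      have : a + (n + 1) = (a + n) + 1 := by omega
      rw [this]
      show (iterOpt f (a + n) p).bind f = _
      rw [ih, Option.bind_assoc]
      rfl

lemma transGen_of_iterOpt (f : V → Option V) (k : ℕ) (hk : 1 ≤ k) (p q : V)
    (h : iterOpt f k p = some q) : Relation.TransGen (pstep f) p q := by
  induction k generalizing q with
  | zero => omega
  | succ n ih =>
      rcases Nat.eq_or_lt_of_le hk with h1 | h1
      · -- n = 0
        have hn : n = 0 := by omega
        subst hn
        simp only [iterOpt, Option.bind] at h
        exact Relation.TransGen.single h
      · have hn : 1 ≤ n := by omega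
        change (iterOpt f n p).bind f = some q at h
        rcases Option.bind_eq_some_iff.mp h with ⟨m, hm, hfm⟩
        exact Relation.TransGen.tail (ih hn m hm) hfm

lemma iterOpt_of_transGen (f : V → Option V) (p q : V)
    (h : Relation.TransGen (pstep f) p q) : ∃ k, 1 ≤ k ∧ iterOpt f k p = some q := by
  induction h with
  | single h => exact ⟨1, le_refl _, by simpa [iterOpt, pstep] using h⟩
  | tail _ h ih =>
      rcases ih with ⟨k, hk, hiter⟩
      exact ⟨k + 1, by omega, by
        show (iterOpt f k p).bind f = _
        rw [hiter]; simpa [pstep] using h⟩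

lemma exists_iterOpt_none (f : V → Option V) (hf : Acyc f) (p : V) :
    ∃ k, iterOpt f k p = none := by
  by_contra h
  push_neg at h
  have h' : ∀ k : ℕ, ∃ v, iterOpt f k p = some v := by
    intro k
    rcases Option.ne_none_iff_exists'.mp (h k) with ⟨v, hv⟩
    exact ⟨v, hv⟩
  choose g hg using h'
  obtain ⟨i, j, hij, hgij⟩ := Fintype.exists_ne_map_eq_of_card_lt
    (fun i : Fin (Fintype.card V + 1) => g i.1) (by simp)
  wlog hlt : (i : ℕ) < (j : ℕ) generalizing i j
  · exact this j i hij.symm hgij.symm (by omega)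
  have key : iterOpt f ((j : ℕ) - i) (g i) = some (g j) := by
    have : iterOpt f (i + ((j:ℕ) - i)) p = (iterOpt f i p).bind (iterOpt f ((j:ℕ) - i)) :=
      iterOpt_add f i _ p
    rw [hg i] at this
    have h2 : (i : ℕ) + ((j:ℕ) - i) = (j : ℕ) := by omega
    rw [h2, hg j] at this
    exact this.symm
  rw [← hgij] at key
  exact hf (g i) (transGen_of_iterOpt f _ (by omega) _ _ key)

variable {R : Type*} [CommRing R]

def Pmat (f : V → Option V) : Matrix V V R :=
  Matrix.of fun p q => if f p = some q then 1 else 0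

lemma det_one_sub_Pmat_acyc [DecidableEq V] [IsDomain R] (f : V → Option V) (hf : Acyc f) :
    (1 - Pmat f : Matrix V V R).det = 1 := by
  set d : V → ℕ := fun p => Nat.find (exists_iterOpt_none f hf p) with hd
  have hdesc : ∀ p q, f p = some q → d q < d p := by
    intro p q hpq
    have hdp1 : 1 ≤ d p := by
      rcases Nat.eq_zero_or_pos (d p) with h0 | h
      · exfalso
        have hthis : iterOpt f (d p) p = none := Nat.find_spec (exists_iterOpt_none f hf p)
        rw [h0] at hthis
        simp [iterOpt] at hthis
      · exact h
    have hspec : iterOpt f (d p) p = none := Nat.find_spec (exists_iterOpt_none f hf p)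
    have : iterOpt f (d p - 1) q = none := by
      have h2 : iterOpt f (1 + (d p - 1)) p = (iterOpt f 1 p).bind (iterOpt f (d p - 1)) :=
        iterOpt_add f 1 _ p
      have h3 : (1 : ℕ) + (d p - 1) = d p := by omega
      rw [h3] at h2
      have h4 : iterOpt f 1 p = f p := by simp [iterOpt]
      rw [hspec, h4, hpq] at h2
      exact h2.symm
    have hle : d q ≤ d p - 1 := Nat.find_le this
    omega
  have hbt : BlockTriangular (1 - Pmat f : Matrix V V R) (fun p => -(d p : ℤ)) := by
    intro p q hlt
    simp only [neg_lt_neg_iff, Int.ofNat_lt, Nat.cast_lt] at hlt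
    have hpq : p ≠ q := by rintro rfl; exact lt_irrefl _ hlt
    have hfpq : ¬ (f p = some q) := fun h => by have := hdesc p q h; omega
    simp [Pmat, Matrix.sub_apply, Matrix.one_apply, hpq, hfpq]
  rw [hbt.det]
  apply Finset.prod_eq_one
  intro a _
  have : ((1 - Pmat f : Matrix V V R).toSquareBlock (fun p => -(d p : ℤ)) a) = 1 := by
    ext ⟨p, hp⟩ ⟨q, hq⟩
    have hdq : d p = d q := by
      have h1 : -(d p:ℤ) = a := hp
      have h2 : -(d q:ℤ) = a := hq
      omega
    by_cases hpq : p = q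
    · subst hpq
      have hfp : ¬ (f p = some p) := fun h => by have := hdesc p p h; omega
      simp [Matrix.toSquareBlock_def, Pmat, Matrix.one_apply, hfp]
    · have hfpq : ¬ (f p = some q) := fun h => by have := hdesc p q h; omega
      simp [Matrix.toSquareBlock_def, Pmat, Matrix.one_apply, hpq, hfpq,
        Subtype.ext_iff]
  rw [this, Matrix.det_one]


lemma det_one_sub_Pmat_cyc [DecidableEq V] [IsDomain R] (f : V → Option V) (hf : ¬ Acyc f) :
    (1 - Pmat f : Matrix V V R).det = 0 := by
  rw [Acyc] at hf
  push_neg at hf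
  obtain ⟨p, hp⟩ := hf
  obtain ⟨k, hk1, hk⟩ := iterOpt_of_transGen f p p hp
  set C : Finset V := Finset.univ.filter (fun q => ∃ i, i < k ∧ iterOpt f i p = some q) with hC
  have hmemC : ∀ q, q ∈ C ↔ ∃ i, i < k ∧ iterOpt f i p = some q := by
    intro q; simp [hC]
  have hpC : p ∈ C := (hmemC p).mpr ⟨0, by omega, rfl⟩
  -- the successor map
  have hnext : ∀ q ∈ C, ∃ r ∈ C, f q = some r := by
    intro q hq
    rcases (hmemC q).mp hq with ⟨i, hik, hi⟩
    have hstep : iterOpt f (i+1) p = f q := by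
      show (iterOpt f i p).bind f = f q
      rw [hi]; rfl
    rcases Nat.lt_or_ge (i+1) k with hik1 | hik1
    · -- iterOpt f (i+1) p is some, since iterOpt f k p is some
      have hsplit : iterOpt f k p = (iterOpt f (i+1) p).bind (iterOpt f (k - (i+1))) := by
        have := iterOpt_add f (i+1) (k - (i+1)) p
        rw [show (i+1) + (k - (i+1)) = k by omega] at this
        exact this
      rcases Option.eq_none_or_eq_some (iterOpt f (i+1) p) with hnone | ⟨r, hr⟩
      · rw [hnone] at hsplit; rw [hk] at hsplit; simp at hsplit
      · exact ⟨r, (hmemC r).mpr ⟨i+1, hik1, hr⟩, by rw [← hstep, hr]⟩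
    · have hik2 : i + 1 = k := by omega
      refine ⟨p, hpC, ?_⟩
      rw [← hstep, hik2, hk]
  have hprev : ∀ q ∈ C, ∃ r ∈ C, f r = some q := by
    intro q hq
    rcases (hmemC q).mp hq with ⟨i, hik, hi⟩
    rcases Nat.eq_zero_or_pos i with h0 | h0
    · -- q = p, predecessor is at k - 1
      have hqp : q = p := by rw [h0] at hi; simpa [iterOpt] using hi.symm
      have hsplit : iterOpt f k p = (iterOpt f (k-1) p).bind f := by
        have : iterOpt f ((k-1)+1) p = (iterOpt f (k-1) p).bind f := rfl
        rw [show (k-1)+1 = k by omega] at this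
        exact this
      rcases Option.eq_none_or_eq_some (iterOpt f (k-1) p) with hnone | ⟨r, hr⟩
      · rw [hnone] at hsplit; rw [hk] at hsplit; simp at hsplit
      · refine ⟨r, (hmemC r).mpr ⟨k-1, by omega, hr⟩, ?_⟩
        rw [hr] at hsplit
        rw [hk] at hsplit
        rw [hqp]
        exact hsplit.symm
    · have hsplit : iterOpt f i p = (iterOpt f (i-1) p).bind f := by
        have : iterOpt f ((i-1)+1) p = (iterOpt f (i-1) p).bind f := rfl
        rw [show (i-1)+1 = i by omega] at this
        exact this
      rcases Option.eq_none_or_eq_some (iterOpt f (i-1) p) with hnone | ⟨r, hr⟩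
      · rw [hnone] at hsplit; rw [hi] at hsplit; simp at hsplit
      · refine ⟨r, (hmemC r).mpr ⟨i-1, by omega, hr⟩, ?_⟩
        rw [hr, hi] at hsplit
        exact hsplit.symm
  -- successor as a function on the subtype
  have hnext' : ∀ q : {x // x ∈ C}, ∃ r : {x // x ∈ C}, f q.1 = some r.1 := by
    intro ⟨q, hq⟩
    rcases hnext q hq with ⟨r, hr, hfr⟩
    exact ⟨⟨r, hr⟩, hfr⟩
  choose φ hφ using hnext'
  have hsurj : Function.Surjective φ := by
    intro ⟨q, hq⟩
    rcases hprev q hq with ⟨r, hr, hfr⟩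
    refine ⟨⟨r, hr⟩, ?_⟩
    have := hφ ⟨r, hr⟩
    rw [hfr] at this
    exact Subtype.ext (by exact (Option.some_injective _ this).symm)
  have hinj : Function.Injective φ := (Finite.injective_iff_surjective).mpr hsurj
  -- unique predecessor in C
  have huniq : ∀ q ∈ C, ∀ r1 ∈ C, ∀ r2 ∈ C, f r1 = some q → f r2 = some q → r1 = r2 := by
    intro q hq r1 hr1 r2 hr2 h1 h2
    have e1 : φ ⟨r1, hr1⟩ = φ ⟨r2, hr2⟩ := by
      apply Subtype.ext
      have g1 := hφ ⟨r1, hr1⟩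
      have g2 := hφ ⟨r2, hr2⟩
      rw [h1] at g1
      rw [h2] at g2
      exact (Option.some_injective _ g1).symm.trans (Option.some_injective _ g2)
    have := hinj e1
    exact congrArg Subtype.val this
  -- the left kernel vector
  set x : V → R := fun q => if q ∈ C then 1 else 0 with hx
  have hxne : x ≠ 0 := by
    intro h
    have := congrFun h p
    simp [hx, hpC] at this
  have hker : Matrix.vecMul x (1 - Pmat f : Matrix V V R) = 0 := by
    funext q
    show ∑ r, x r * ((1 - Pmat f : Matrix V V R) r q) = 0
    have hterm : ∀ r, x r * ((1 - Pmat f : Matrix V V R) r q)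
        = (if r ∈ C then ((if r = q then (1:R) else 0) - (if f r = some q then 1 else 0)) else 0) := by
      intro r
      by_cases hr : r ∈ C <;> simp [hx, hr, Pmat, Matrix.sub_apply, Matrix.one_apply]
    rw [Finset.sum_congr rfl (fun r _ => hterm r)]
    rw [Finset.sum_ite_mem, Finset.univ_inter, Finset.sum_sub_distrib]
    have h1 : (∑ r ∈ C, if r = q then (1:R) else 0) = if q ∈ C then 1 else 0 := by
      simp [Finset.sum_ite_eq']
    have h2 : (∑ r ∈ C, if f r = some q then (1:R) else 0) = if q ∈ C then 1 else 0 := by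
      by_cases hq : q ∈ C
      · rcases hprev q hq with ⟨r0, hr0, hfr0⟩
        rw [Finset.sum_eq_single r0]
        · simp [hfr0, hq]
        · intro r hr hne
          have : ¬ (f r = some q) := fun h => hne (huniq q hq r hr r0 hr0 h hfr0)
          simp [this]
        · intro h; exact absurd hr0 (by simpa using fun hh => h hr0)
      · rw [if_neg hq]
        apply Finset.sum_eq_zero
        intro r hr
        have : ¬ (f r = some q) := by
          intro h
          rcases hnext r hr with ⟨r', hr', hfr'⟩
          rw [h] at hfr'
          exact hq (by rwa [Option.some_injective _ hfr'.symm] at hr')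
        simp [this]
    rw [h1, h2, sub_self]
  exact Matrix.exists_vecMul_eq_zero_iff.mp ⟨x, hxne, hker⟩ 


lemma det_forest_expansion [DecidableEq V] [IsDomain R] (W : V → V → R) :
    (Matrix.of fun p q : V => (if p = q then 1 + ∑ r, W p r else 0) - W p q).det
      = ∑ f ∈ Finset.univ.filter (fun f : V → Option V => Acyc f),
          ∏ p, (f p).elim 1 (W p) := by
  set g : V → Option V → (V → R) := fun p o =>
    o.elim (fun q => if p = q then 1 else 0)
      (fun r q => W p r * ((if p = q then 1 else 0) - (if r = q then 1 else 0))) with hg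
  have hrow : (Matrix.of fun p q : V => (if p = q then 1 + ∑ r, W p r else 0) - W p q)
      = Matrix.of (fun p => ∑ o : Option V, g p o) := by
    ext p q
    simp only [Matrix.of_apply]
    rw [Finset.sum_apply]
    rw [Fintype.sum_option]
    have hsum : ∑ r : V, g p (some r) q
        = (if p = q then ∑ r, W p r else 0) - W p q := by
      simp only [hg, Option.elim, mul_sub, Finset.sum_sub_distrib, mul_ite, mul_one, mul_zero]
      congr 1
      · by_cases hpq : p = q <;> simp [hpq]
      · simp
    rw [hsum]
    simp only [hg, Option.elim]
    by_cases hpq : p = q <;> simp [hpq] <;> ring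
  rw [hrow]
  have expand : (Matrix.of (fun p => ∑ o : Option V, g p o)).det
      = ∑ F : V → Option V, Matrix.detRowAlternating (R := R) (Matrix.of fun p => g p (F p)) := by
    show Matrix.detRowAlternating (R := R) (Matrix.of fun p => ∑ o : Option V, g p o) = _
    exact (Matrix.detRowAlternating (R := R) (n := V)).toMultilinearMap.map_sum g
  rw [expand]
  have per : ∀ F : V → Option V,
      Matrix.detRowAlternating (R := R) (Matrix.of fun p => g p (F p))
        = (∏ p, (F p).elim 1 (W p)) * (1 - Pmat F : Matrix V V R).det := by
    intro F
    set c : V → R := fun p => (F p).elim 1 (W p) with hc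
    have hsplit : (Matrix.of fun p => g p (F p)) = fun p => c p • (1 - Pmat F : Matrix V V R) p := by
      funext p q
      cases hFp : F p with
      | none => simp [hg, hc, hFp, Pmat, Matrix.sub_apply, Matrix.one_apply]
      | some r =>
          simp only [hg, hc, hFp, Option.elim, Matrix.of_apply, Pi.smul_apply, smul_eq_mul,
            Matrix.sub_apply, Matrix.one_apply, Pmat]
          congr 2
          simp [Matrix.of_apply, eq_comm]
    rw [hsplit]
    have h2 : (Matrix.detRowAlternating (R := R) (n := V)) (fun p => c p • (1 - Pmat F : Matrix V V R) p)
        = (∏ i, c i) • (Matrix.detRowAlternating (R := R) (n := V)) (1 - Pmat F) :=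
      (Matrix.detRowAlternating (R := R) (n := V)).toMultilinearMap.map_smul_univ c
        ((1 - Pmat F : Matrix V V R))
    rw [h2, smul_eq_mul]
    rfl
  rw [Finset.sum_congr rfl (fun F _ => per F)]
  have hsplit2 : ∀ F : V → Option V,
      (∏ p, (F p).elim 1 (W p)) * (1 - Pmat F : Matrix V V R).det
        = if Acyc F then ∏ p, (F p).elim 1 (W p) else 0 := by
    intro F
    by_cases hF : Acyc F
    · rw [det_one_sub_Pmat_acyc F hF, if_pos hF, mul_one]
    · rw [det_one_sub_Pmat_cyc F hF, if_neg hF, mul_zero]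
  rw [Finset.sum_congr rfl (fun F _ => hsplit2 F)]
  rw [Finset.sum_ite, Finset.sum_const_zero, add_zero]

end MatrixForest

noncomputable section SpinSetup
open Finset Matrix MvPolynomial

variable {U : Type*} [Fintype U]

abbrev SVar (U : Type*) := (U × U) ⊕ ((U × U) ⊕ (U × Bool))

abbrev SR (U : Type*) := MvPolynomial (SVar U) ℚ

def svr (u v : U) : SVar U := Sum.inl (u, v)
def dvr (u v : U) : SVar U := Sum.inr (Sum.inl (u, v))
def zvr (u : U) (e : Bool) : SVar U := Sum.inr (Sum.inr (u, e))

def arcvar (p q : U × Bool) : SVar U :=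
  if p.2 = q.2 then svr p.1 q.1
  else (if p.1 = q.1 then zvr p.1 q.2 else dvr p.1 q.1)

variable (A : U → U → Prop)

def Wm : Matrix (U × Bool) (U × Bool) (SR U) := Matrix.of fun p q =>
  if p.1 = q.1 then (if p.2 = q.2 then 0 else MvPolynomial.X (zvr p.1 q.2))
  else if A p.1 q.1 then (if p.2 = q.2 then MvPolynomial.X (svr p.1 q.1) else MvPolynomial.X (dvr p.1 q.1)) else 0

def Mm : Matrix (U × Bool) (U × Bool) (SR U) :=
  Matrix.of fun p q => (if p = q then 1 + ∑ r, Wm A p r else 0) - Wm A p q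

def dsum (u : U) : SR U := ∑ v, if u ≠ v ∧ A u v then MvPolynomial.X (svr u v) + MvPolynomial.X (dvr u v) else 0

def abW (u v : U) : SR U := if u ≠ v ∧ A u v then MvPolynomial.X (svr u v) + MvPolynomial.X (dvr u v) else 0
def abD (u v : U) : SR U := if u ≠ v ∧ A u v then MvPolynomial.X (svr u v) - MvPolynomial.X (dvr u v) else 0

def Sm : Matrix U U (SR U) := Matrix.of fun u v =>
  (if u = v then 1 + dsum A u else 0) - abW A u v
def Dm : Matrix U U (SR U) := Matrix.of fun u v =>
  (if u = v then 1 + dsum A u + MvPolynomial.X (zvr u false) + MvPolynomial.X (zvr u true) else 0) - abD A u v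
def Bm : Matrix U U (SR U) := Matrix.of fun u v =>
  if u = v then MvPolynomial.X (zvr u true) - MvPolynomial.X (zvr u false) else 0

def Qm : Matrix (U × Bool) (U × Bool) (SR U) := Matrix.of fun p q =>
  if p.1 = q.1 then (if q.2 && p.2 then -1 else 1) else 0

def Nm : Matrix (U × Bool) (U × Bool) (SR U) := Matrix.of fun p q =>
  if p.2 = false ∧ q.2 = false then Sm A p.1 q.1
  else if p.2 = false ∧ q.2 = true then Bm p.1 q.1
  else if p.2 = true ∧ q.2 = true then Dm A p.1 q.1
  else 0

lemma Wm_rowsum (u : U) (e : Bool) :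
    ∑ r, Wm A (u, e) r = MvPolynomial.X (zvr u (!e)) + dsum A u := by
  rw [Fintype.sum_prod_type]
  have hterm : ∀ v : U, (∑ e' : Bool, Wm A (u, e) (v, e'))
      = (if v = u then MvPolynomial.X (zvr u (!e)) else 0) + abW A u v := by
    intro v
    by_cases hv : v = u
    · subst hv
      cases e <;> simp [Wm, Fintype.sum_bool, abW]
    · have hv' : u ≠ v := fun h => hv h.symm
      by_cases hAuv : A u v
      · cases e <;> simp [Wm, Fintype.sum_bool, abW, hv', hAuv, hv, add_comm]
      · cases e <;> simp [Wm, Fintype.sum_bool, abW, hv', hAuv, hv]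
  rw [Finset.sum_congr rfl (fun v _ => hterm v)]
  rw [Finset.sum_add_distrib]
  simp [dsum, abW]

lemma MQ_eq_QN (hA : ∀ u, ¬ A u u) : Mm A * Qm = Qm * Nm A := by
  refine Matrix.ext (fun p q => ?_)
  obtain ⟨u, e⟩ := p
  obtain ⟨v, j⟩ := q
  have hL : (Mm A * Qm : Matrix (U × Bool) (U × Bool) (SR U)) (u, e) (v, j)
      = Mm A (u,e) (v, false) * Qm (v,false) (v,j) + Mm A (u,e) (v,true) * Qm (v,true) (v,j) := by
    rw [Matrix.mul_apply, Fintype.sum_prod_type]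
    rw [Finset.sum_eq_single v]
    · simp [Fintype.sum_bool, add_comm]
    · intro w _ hw
      have : ∀ i : Bool, Qm (w, i) (v, j) = 0 := by
        intro i; simp [Qm, hw]
      simp [this]
    · simp
  have hR : (Qm * Nm A : Matrix (U × Bool) (U × Bool) (SR U)) (u, e) (v, j)
      = Qm (u,e) (u,false) * Nm A (u,false) (v,j) + Qm (u,e) (u,true) * Nm A (u,true) (v,j) := by
    rw [Matrix.mul_apply, Fintype.sum_prod_type]
    rw [Finset.sum_eq_single u]
    · simp [Fintype.sum_bool, add_comm]
    · intro w _ hw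
      have hw' : ¬ u = w := fun h => hw h.symm
      have : ∀ i : Bool, Qm (u, e) (w, i) = 0 := by
        intro i; simp [Qm, hw']
      simp [this]
    · simp
  rw [hL, hR]
  have hMval : ∀ e' : Bool, Mm A (u,e) (v,e')
      = (if (u,e) = (v,e') then 1 + (MvPolynomial.X (zvr u (!e)) + dsum A u) else 0) - Wm A (u,e) (v,e') := by
    intro e'; rw [Mm]; simp only [Matrix.of_apply]; rw [Wm_rowsum]
  rw [hMval, hMval]
  by_cases huv : u = v
  · subst huv
    have hAuu : ¬ A u u := hA u
    cases e <;> cases j <;>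
      simp [Wm, Qm, Nm, Sm, Dm, Bm, abW, abD, hAuu, Prod.ext_iff] <;> ring
  · have hvu : ¬ v = u := fun h => huv h.symm
    by_cases hAuv : A u v
    · cases e <;> cases j <;>
        simp [Wm, Qm, Nm, Sm, Dm, Bm, abW, abD, huv, hvu, hAuv, Prod.ext_iff] <;> ring
    · cases e <;> cases j <;>
        simp [Wm, Qm, Nm, Sm, Dm, Bm, abW, abD, huv, hvu, hAuv, Prod.ext_iff]

lemma det_Qm_ne_zero : (Qm : Matrix (U × Bool) (U × Bool) (SR U)).det ≠ 0 := by
  classical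
  set Q' : Matrix (U × Bool) (U × Bool) (SR U) := Matrix.of fun p q =>
    if p.1 = q.1 then (MvPolynomial.C (1/2 : ℚ) * (if p.2 && q.2 then -1 else 1)) else 0 with hQ'
  have hhalf : (MvPolynomial.C (1/2 : ℚ) : SR U) + MvPolynomial.C (1/2 : ℚ) = 1 := by
    rw [← MvPolynomial.C_add, ← MvPolynomial.C_1]
    norm_num
  have hQQ' : Qm * Q' = 1 := by
    refine Matrix.ext (fun p q => ?_)
    obtain ⟨u, e⟩ := p
    obtain ⟨v, e'⟩ := q
    rw [Matrix.mul_apply, Fintype.sum_prod_type]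
    by_cases huv : u = v
    · subst huv
      rw [Finset.sum_eq_single u]
      · rw [Fintype.sum_bool]
        cases e <;> cases e' <;>
          simp [Qm, hQ', Matrix.one_apply, Prod.ext_iff, hhalf] <;>
          · rw [← hhalf]; ring
      · intro w _ hw
        have hw' : ¬ u = w := fun h => hw h.symm
        have h1 : ∀ i : Bool, Qm (u, e) (w, i) = 0 := by
          intro i; simp [Qm, hw']
        simp [h1]
      · simp
    · rw [Finset.sum_eq_zero]
      · simp [Matrix.one_apply, Prod.ext_iff, huv]
      · intro w _
        by_cases hw : u = w
        · subst hw
          have : ∀ i : Bool, Q' (u, i) (v, e') = 0 := by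
            intro i; simp [hQ', huv]
          simp [this]
        · have : ∀ i : Bool, Qm (u, e) (w, i) = 0 := by
            intro i; simp [Qm, hw]
          simp [this]
  intro h0
  have := congrArg Matrix.det hQQ'
  rw [Matrix.det_mul, h0, zero_mul, Matrix.det_one] at this
  exact zero_ne_one this

def sumEquiv (U : Type*) : (U × Bool) ≃ (U ⊕ U) :=
  (Equiv.prodComm U Bool).trans (Equiv.boolProdEquivSum U)

lemma det_Nm : (Nm A).det = (Sm A).det * (Dm A).det := by
  have hsub : (Nm A).submatrix (sumEquiv U).symm (sumEquiv U).symm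
      = Matrix.fromBlocks (Sm A) (Bm : Matrix U U (SR U)) 0 (Dm A) := by
    refine Matrix.ext (fun i j => ?_)
    cases i <;> cases j <;>
      simp [Nm, _root_.sumEquiv, Equiv.boolProdEquivSum, Matrix.submatrix_apply,
        Matrix.fromBlocks]
  have := Matrix.det_submatrix_equiv_self (sumEquiv U).symm (Nm A)
  rw [hsub] at this
  rw [← this, Matrix.det_fromBlocks_zero₂₁]

lemma det_Mm_factor (hA : ∀ u, ¬ A u u) : (Mm A).det = (Sm A).det * (Dm A).det := by
  have h := congrArg Matrix.det (MQ_eq_QN A hA)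
  rw [Matrix.det_mul, Matrix.det_mul] at h
  rw [mul_comm ((Qm : Matrix (U × Bool) (U × Bool) (SR U)).det)] at h
  have := mul_right_cancel₀ det_Qm_ne_zero h
  rw [this, det_Nm]

end SpinSetup

noncomputable section SpinCount
open Finset Matrix MvPolynomial

variable {U : Type*} [Fintype U]

def zswapFun (c : U → Bool) : SVar U → SVar U
  | Sum.inr (Sum.inr (u, e)) => Sum.inr (Sum.inr (u, xor (c u) e))
  | w => w

@[simp] lemma zswap_svr (c : U → Bool) (u v : U) : zswapFun c (svr u v) = svr u v := rfl
@[simp] lemma zswap_dvr (c : U → Bool) (u v : U) : zswapFun c (dvr u v) = dvr u v := rfl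
@[simp] lemma zswap_zvr (c : U → Bool) (u : U) (e : Bool) :
    zswapFun c (zvr u e) = zvr u (xor (c u) e) := rfl

lemma zswapFun_invol (c : U → Bool) : Function.Involutive (zswapFun c) := by
  intro w
  rcases w with w | w | ⟨u, e⟩
  · rfl
  · rfl
  · simp only [show (Sum.inr (Sum.inr (u, e)) : SVar U) = zvr u e from rfl, zswap_zvr]
    cases c u <;> cases e <;> rfl

variable (A : U → U → Prop)

lemma rename_Sm (c : U → Bool) :
    (Sm A).map (MvPolynomial.rename (zswapFun c)) = Sm A := by
  refine Matrix.ext (fun u v => ?_)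
  simp only [Matrix.map_apply, Sm, Matrix.of_apply, abW, dsum,
    map_sub, apply_ite (MvPolynomial.rename (zswapFun c)), map_add, _root_.map_one, map_zero,
    map_sum, MvPolynomial.rename_X, zswap_svr, zswap_dvr]

lemma rename_Dm (c : U → Bool) :
    (Dm A).map (MvPolynomial.rename (zswapFun c)) = Dm A := by
  refine Matrix.ext (fun u v => ?_)
  simp only [Matrix.map_apply, Dm, Matrix.of_apply, abD, dsum,
    map_sub, apply_ite (MvPolynomial.rename (zswapFun c)), map_add, _root_.map_one, map_zero,
    map_sum, MvPolynomial.rename_X, zswap_svr, zswap_dvr, zswap_zvr]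
  by_cases huv : u = v
  · subst huv
    cases hc : c u <;> simp [hc, Bool.xor_false, Bool.xor_true] <;> ring
  · simp [huv]

lemma rename_det_Mm (hA : ∀ u, ¬ A u u) (c : U → Bool) :
    (MvPolynomial.rename (zswapFun c)) ((Mm A).det) = (Mm A).det := by
  set φ : SR U →+* SR U := (MvPolynomial.rename (zswapFun c)).toRingHom with hφ
  have h1 : (MvPolynomial.rename (zswapFun c)) ((Mm A).det) = φ ((Mm A).det) := rfl
  rw [h1, det_Mm_factor A hA, RingHom.map_mul, RingHom.map_det, RingHom.map_det]
  have hS : φ.mapMatrix (Sm A) = Sm A := rename_Sm A c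
  have hD : φ.mapMatrix (Dm A) = Dm A := rename_Dm A c
  rw [hS, hD, ← det_Mm_factor A hA]

end SpinCount



noncomputable section SpinNu
open Finset Matrix MvPolynomial

variable {U : Type*} [Fintype U]

def nuF (f : U × Bool → Option (U × Bool)) : SVar U →₀ ℕ :=
  ∑ p : U × Bool, (f p).elim 0 (fun q => Finsupp.single (arcvar p q) 1)

lemma arcvar_eq_svr_iff {p q : U × Bool} {u v : U} :
    arcvar p q = svr u v ↔ p.1 = u ∧ q.1 = v ∧ p.2 = q.2 := by
  unfold arcvar
  by_cases h2 : p.2 = q.2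
  · simp [h2, svr, Prod.ext_iff]
  · by_cases h1 : p.1 = q.1 <;> simp [h2, h1, svr, zvr, dvr]

lemma arcvar_eq_dvr_iff {p q : U × Bool} {u v : U} :
    arcvar p q = dvr u v ↔ p.1 = u ∧ q.1 = v ∧ p.2 ≠ q.2 ∧ p.1 ≠ q.1 := by
  unfold arcvar
  by_cases h2 : p.2 = q.2
  · simp [h2, svr, dvr]
  · by_cases h1 : p.1 = q.1
    · simp only [if_neg h2, if_pos h1, zvr, dvr]
      constructor
      · intro h; exact absurd h (by simp)
      · rintro ⟨hpu, hqu, -, hne⟩; exact absurd h1 hne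
    · simp [h2, h1, dvr, Prod.ext_iff]

lemma arcvar_eq_zvr_iff {p q : U × Bool} {u : U} {ε : Bool} :
    arcvar p q = zvr u ε ↔ p.1 = u ∧ q.1 = u ∧ q.2 = ε ∧ p.2 ≠ q.2 := by
  unfold arcvar
  by_cases h2 : p.2 = q.2
  · simp [h2, svr, zvr]
  · by_cases h1 : p.1 = q.1
    · simp only [if_neg h2, if_pos h1, zvr, Sum.inr.injEq, Prod.mk.injEq]
      constructor
      · rintro ⟨h3, h4⟩; exact ⟨h3, h1 ▸ h3, h4, h2⟩
      · rintro ⟨h3, -, h4, -⟩; exact ⟨h3, h4⟩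
    · simp only [if_neg h2, if_neg h1, dvr, zvr, Sum.inr.injEq]
      constructor
      · intro h; exact absurd h (by simp)
      · rintro ⟨hpu, hqu, -, -⟩; exact absurd (hpu.trans hqu.symm) h1

lemma nuF_apply (f : U × Bool → Option (U × Bool)) (w : SVar U) :
    nuF f w
      = ∑ p : U × Bool, ((f p).elim 0 (fun q => Finsupp.single (arcvar p q) 1) : SVar U →₀ ℕ) w := by
  rw [nuF, Finsupp.finset_sum_apply]

lemma nuF_svr (f : U × Bool → Option (U × Bool)) (u v : U) :
    nuF f (svr u v)
      = (univ.filter fun e : Bool => f (u,e) = some (v,e)).card := by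
  rw [nuF_apply, Fintype.sum_prod_type, Finset.card_filter]
  have hterm : ∀ (w : U) (ε : Bool),
      ((f (w,ε)).elim 0 (fun q => Finsupp.single (arcvar (w,ε) q) 1) : SVar U →₀ ℕ) (svr u v)
        = if w = u ∧ f (w, ε) = some (v, ε) then 1 else 0 := by
    intro w ε
    cases hfw : f (w, ε) with
    | none => simp [hfw]
    | some q =>
        obtain ⟨v', e'⟩ := q
        simp only [Option.elim, Finsupp.single_apply, hfw, arcvar_eq_svr_iff,
          Option.some.injEq, Prod.mk.injEq]
        refine if_congr ?_ rfl rfl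
        constructor
        · rintro ⟨ha, hb, hc⟩; exact ⟨ha, hb, hc.symm⟩
        · rintro ⟨ha, hb, hc⟩; exact ⟨ha, hb, hc.symm⟩
  calc ∑ w : U, ∑ ε : Bool,
        ((f (w,ε)).elim 0 (fun q => Finsupp.single (arcvar (w,ε) q) 1) : SVar U →₀ ℕ) (svr u v)
      = ∑ w : U, ∑ ε : Bool, if w = u ∧ f (w, ε) = some (v, ε) then 1 else 0 := by
        exact Finset.sum_congr rfl (fun w _ => Finset.sum_congr rfl (fun ε _ => hterm w ε))
    _ = ∑ ε : Bool, if f (u, ε) = some (v, ε) then 1 else 0 := by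
        rw [Finset.sum_eq_single u]
        · simp
        · intro w _ hw; simp [hw]
        · simp

lemma nuF_dvr (f : U × Bool → Option (U × Bool)) (u v : U) (huv : u ≠ v) :
    nuF f (dvr u v)
      = (univ.filter fun e : Bool => f (u,e) = some (v,!e)).card := by
  rw [nuF_apply, Fintype.sum_prod_type, Finset.card_filter]
  have hterm : ∀ (w : U) (ε : Bool),
      ((f (w,ε)).elim 0 (fun q => Finsupp.single (arcvar (w,ε) q) 1) : SVar U →₀ ℕ) (dvr u v)
        = if w = u ∧ f (w, ε) = some (v, !ε) then 1 else 0 := by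
    intro w ε
    cases hfw : f (w, ε) with
    | none => simp [hfw]
    | some q =>
        obtain ⟨v', e'⟩ := q
        simp only [Option.elim, Finsupp.single_apply, hfw, arcvar_eq_dvr_iff,
          Option.some.injEq, Prod.mk.injEq]
        refine if_congr ?_ rfl rfl
        constructor
        · rintro ⟨ha, hb, hc, -⟩
          refine ⟨ha, hb, ?_⟩
          revert hc; cases ε <;> cases e' <;> decide
        · rintro ⟨ha, hb, hc⟩
          refine ⟨ha, hb, ?_, ?_⟩
          · revert hc; cases ε <;> cases e' <;> decide
          · rw [ha, hb]; exact huv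
  calc ∑ w : U, ∑ ε : Bool,
        ((f (w,ε)).elim 0 (fun q => Finsupp.single (arcvar (w,ε) q) 1) : SVar U →₀ ℕ) (dvr u v)
      = ∑ w : U, ∑ ε : Bool, if w = u ∧ f (w, ε) = some (v, !ε) then 1 else 0 := by
        exact Finset.sum_congr rfl (fun w _ => Finset.sum_congr rfl (fun ε _ => hterm w ε))
    _ = ∑ ε : Bool, if f (u, ε) = some (v, !ε) then 1 else 0 := by
        rw [Finset.sum_eq_single u]
        · simp
        · intro w _ hw; simp [hw]
        · simp

lemma nuF_dvr_self (f : U × Bool → Option (U × Bool)) (u : U) :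
    nuF f (dvr u u) = 0 := by
  rw [nuF_apply]
  apply Finset.sum_eq_zero
  intro p _
  cases hfp : f p with
  | none => simp [hfp]
  | some q =>
      simp only [Option.elim, Finsupp.single_apply, hfp]
      rw [if_neg]
      rw [arcvar_eq_dvr_iff]
      rintro ⟨h1, h2, -, h4⟩
      exact h4 (h1.trans h2.symm)

lemma nuF_zvr (f : U × Bool → Option (U × Bool)) (u : U) (ε : Bool) :
    nuF f (zvr u ε) = if f (u, !ε) = some (u, ε) then 1 else 0 := by
  rw [nuF_apply, Fintype.sum_prod_type]
  have hterm : ∀ (w : U) (e : Bool),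
      ((f (w,e)).elim 0 (fun q => Finsupp.single (arcvar (w,e) q) 1) : SVar U →₀ ℕ) (zvr u ε)
        = if w = u ∧ e = !ε ∧ f (w, e) = some (u, ε) then 1 else 0 := by
    intro w e
    cases hfw : f (w, e) with
    | none => simp [hfw]
    | some q =>
        obtain ⟨v', e'⟩ := q
        simp only [Option.elim, Finsupp.single_apply, hfw, arcvar_eq_zvr_iff,
          Option.some.injEq, Prod.mk.injEq]
        refine if_congr ?_ rfl rfl
        constructor
        · rintro ⟨ha, hb, hc, hd⟩
          refine ⟨ha, ?_, hb, hc⟩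
          revert hc hd; cases e <;> cases e' <;> cases ε <;> decide
        · rintro ⟨ha, hb, hc, hd⟩
          refine ⟨ha, hc, hd, ?_⟩
          revert hb hd; cases e <;> cases e' <;> cases ε <;> decide
  calc ∑ w : U, ∑ e : Bool,
        ((f (w,e)).elim 0 (fun q => Finsupp.single (arcvar (w,e) q) 1) : SVar U →₀ ℕ) (zvr u ε)
      = ∑ w : U, ∑ e : Bool, if w = u ∧ e = !ε ∧ f (w, e) = some (u, ε) then 1 else 0 := by
        exact Finset.sum_congr rfl (fun w _ => Finset.sum_congr rfl (fun e _ => hterm w e))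
    _ = if f (u, !ε) = some (u, ε) then 1 else 0 := by
        rw [Finset.sum_eq_single u]
        · rw [Fintype.sum_bool]
          cases ε <;> simp
        · intro w _ hw; simp [hw]
        · simp

end SpinNu



noncomputable section SpinAdjust
open Finset MvPolynomial

variable {U : Type*} [Fintype U]

lemma forest_no_self {A : U → U → Prop} {f : U × Bool → Option (U × Bool)}
    (hf : IsRootedForest (strongArc A) f) (p : U × Bool) : f p ≠ some p :=
  fun h => hf.2 p (Relation.TransGen.single h)

lemma forest_no_two {A : U → U → Prop} {f : U × Bool → Option (U × Bool)}
    (hf : IsRootedForest (strongArc A) f) {p q : U × Bool} :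
    f p = some q → f q = some p → False :=
  fun h1 h2 => hf.2 p (Relation.TransGen.head h1 (Relation.TransGen.single h2))

def spinAdjust (f0 : U × Bool → Option (U × Bool)) (σ : U → Bool) :
    U × Bool → Option (U × Bool) :=
  fun p =>
    if h : ∃ e : Bool, f0 (p.1, e) = some (p.1, !e) then
      if p.2 = σ p.1 then
        (f0 (p.1, !(Classical.choose h))).map
          (fun q => (q.1, if q.2 = !(Classical.choose h) then σ p.1 else !(σ p.1)))
      else some (p.1, σ p.1)
    else f0 p

lemma spinAdjust_def (f0 : U × Bool → Option (U × Bool)) (σ : U → Bool) (u : U) (x : Bool) :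
    spinAdjust f0 σ (u, x) =
      if h : ∃ e : Bool, f0 (u, e) = some (u, !e) then
        if x = σ u then
          (f0 (u, !(Classical.choose h))).map
            (fun q => (q.1, if q.2 = !(Classical.choose h) then σ u else !(σ u)))
        else some (u, σ u)
      else f0 (u, x) := rfl

lemma m_arc_ne {A : U → U → Prop} {f0 : U × Bool → Option (U × Bool)}
    (hf0 : IsRootedForest (strongArc A) f0) {u : U}
    (h : ∃ e : Bool, f0 (u, e) = some (u, !e)) {v : U} {d : Bool}
    (hm : f0 (u, !(Classical.choose h)) = some (v, d)) : v ≠ u := by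
  intro hvu
  set e₀ := Classical.choose h with he₀
  have hch : f0 (u, e₀) = some (u, !e₀) := Classical.choose_spec h
  have hm' : f0 (u, !e₀) = some (u, d) := by rw [hm, hvu]
  by_cases hd : d = !e₀
  · exact forest_no_self hf0 (u, !e₀) (by rw [hm', hd])
  · have hd' : d = e₀ := by revert hd; cases d <;> cases e₀ <;> decide
    rw [hd'] at hm'
    exact forest_no_two hf0 hm' hch

lemma spinAdjust_rowA {f0 : U × Bool → Option (U × Bool)} {u : U}
    (h : ∃ e : Bool, f0 (u, e) = some (u, !e)) (σ : U → Bool) :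
    spinAdjust f0 σ (u, σ u)
      = (f0 (u, !(Classical.choose h))).map
          (fun q => (q.1, if q.2 = !(Classical.choose h) then σ u else !(σ u))) := by
  rw [spinAdjust_def, dif_pos h, if_pos rfl]

lemma spinAdjust_rowB {f0 : U × Bool → Option (U × Bool)} {u : U}
    (h : ∃ e : Bool, f0 (u, e) = some (u, !e)) (σ : U → Bool) :
    spinAdjust f0 σ (u, !(σ u)) = some (u, σ u) := by
  rw [spinAdjust_def, dif_pos h, if_neg (by simp)]

lemma spinAdjust_row_of_not {f0 : U × Bool → Option (U × Bool)} {σ : U → Bool} {u : U}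
    (h : ¬ ∃ e : Bool, f0 (u, e) = some (u, !e)) (x : Bool) :
    spinAdjust f0 σ (u, x) = f0 (u, x) := by
  rw [spinAdjust_def, dif_neg h]

lemma spinAdjust_vert {A : U → U → Prop} {f0 : U × Bool → Option (U × Bool)}
    (hf0 : IsRootedForest (strongArc A) f0) (σ : U → Bool) (u : U) (ε : Bool) :
    spinAdjust f0 σ (u, !ε) = some (u, ε)
      ↔ ((∃ e : Bool, f0 (u, e) = some (u, !e)) ∧ σ u = ε) := by
  by_cases h : ∃ e : Bool, f0 (u, e) = some (u, !e)
  · by_cases hε : σ u = ε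
    · subst hε
      rw [spinAdjust_rowB h σ]
      simp [h]
    · have hslot : (!ε) = σ u := by revert hε; cases σ u <;> cases ε <;> decide
      rw [show ((u, !ε) : U × Bool) = (u, σ u) from by rw [← hslot]]
      rw [spinAdjust_rowA h σ]
      constructor
      · intro hm
        rcases Option.map_eq_some_iff.mp hm with ⟨⟨v, d⟩, h1, h2⟩
        have hv : v = u := congrArg Prod.fst h2
        exact absurd hv (m_arc_ne hf0 h h1)
      · rintro ⟨-, hσε⟩
        exact absurd hσε hε
  · rw [spinAdjust_row_of_not h]
    constructor
    · intro hv
      exact absurd ⟨!ε, by simpa using hv⟩ h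
    · rintro ⟨hS, -⟩
      exact absurd hS h

lemma spinAdjust_no_self {A : U → U → Prop} {f0 : U × Bool → Option (U × Bool)}
    (hf0 : IsRootedForest (strongArc A) f0) (σ : U → Bool) (p : U × Bool) :
    spinAdjust f0 σ p ≠ some p := by
  obtain ⟨u, x⟩ := p
  by_cases h : ∃ e : Bool, f0 (u, e) = some (u, !e)
  · by_cases hx : x = σ u
    · subst hx
      rw [spinAdjust_rowA h σ]
      intro hm
      rcases Option.map_eq_some_iff.mp hm with ⟨⟨v, d⟩, h1, h2⟩
      exact absurd (congrArg Prod.fst h2) (m_arc_ne hf0 h h1)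
    · have hx' : x = !(σ u) := by revert hx; cases x <;> cases σ u <;> decide
      subst hx'
      rw [spinAdjust_rowB h σ]
      intro hm
      have h5 := congrArg Prod.snd (Option.some_injective _ hm)
      simp only at h5
      exact absurd h5.symm (by cases σ u <;> decide)
  · rw [spinAdjust_row_of_not h]
    exact forest_no_self hf0 _

lemma cardBool_ne (p : Bool → Prop) [DecidablePred p] (b : Bool) :
    (univ.filter p).card = (if p b then 1 else 0) + (if p (!b) then 1 else 0) := by
  rw [Finset.card_filter, Fintype.sum_bool]
  cases b
  · simp [Nat.add_comm]
  · simp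

lemma spinAdjust_straight {A : U → U → Prop} {f0 : U × Bool → Option (U × Bool)}
    (hf0 : IsRootedForest (strongArc A) f0) (σ : U → Bool) (u v : U) (huv : u ≠ v) :
    (univ.filter fun e : Bool => spinAdjust f0 σ (u,e) = some (v,e)).card
      = (univ.filter fun e : Bool => f0 (u,e) = some (v,e)).card := by
  by_cases h : ∃ e : Bool, f0 (u, e) = some (u, !e)
  · set e₀ := Classical.choose h with he₀
    have hch : f0 (u, e₀) = some (u, !e₀) := Classical.choose_spec h
    rw [cardBool_ne _ (σ u), cardBool_ne (fun e => f0 (u,e) = some (v,e)) (!e₀)]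
    have h1 : (spinAdjust f0 σ (u, σ u) = some (v, σ u)) ↔ (f0 (u, !e₀) = some (v, !e₀)) := by
      rw [spinAdjust_rowA h σ, ← he₀]
      constructor
      · intro hm
        rcases Option.map_eq_some_iff.mp hm with ⟨⟨v₀, d⟩, hm1, hm2⟩
        rw [Prod.ext_iff] at hm2
        obtain ⟨hm2a, hm2b⟩ := hm2
        simp only at hm2a hm2b
        by_cases hd : d = !e₀
        · rw [hd] at hm1
          rw [hm1, hm2a]
        · rw [if_neg hd] at hm2b
          exact absurd hm2b (by cases σ u <;> decide)
      · intro h1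
        rw [h1]
        simp
    have h2 : ¬ (spinAdjust f0 σ (u, !(σ u)) = some (v, !(σ u))) := by
      rw [spinAdjust_rowB h σ]
      intro hm
      exact huv (congrArg Prod.fst (Option.some_injective _ hm))
    have h3 : ¬ (f0 (u, !(!e₀)) = some (v, !(!e₀))) := by
      rw [Bool.not_not, hch]
      intro hm
      exact huv (congrArg Prod.fst (Option.some_injective _ hm))
    rw [if_neg h2, add_zero, if_neg h3, add_zero]
    exact if_congr h1 rfl rfl
  · have hrows : ∀ e : Bool, spinAdjust f0 σ (u, e) = f0 (u, e) :=
      fun e => spinAdjust_row_of_not h e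
    apply congrArg Finset.card
    apply Finset.filter_congr
    intro e _
    rw [hrows e]

lemma spinAdjust_diag {A : U → U → Prop} {f0 : U × Bool → Option (U × Bool)}
    (hf0 : IsRootedForest (strongArc A) f0) (σ : U → Bool) (u v : U) (huv : u ≠ v) :
    (univ.filter fun e : Bool => spinAdjust f0 σ (u,e) = some (v,!e)).card
      = (univ.filter fun e : Bool => f0 (u,e) = some (v,!e)).card := by
  by_cases h : ∃ e : Bool, f0 (u, e) = some (u, !e)
  · set e₀ := Classical.choose h with he₀
    have hch : f0 (u, e₀) = some (u, !e₀) := Classical.choose_spec h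
    rw [cardBool_ne _ (σ u), cardBool_ne (fun e => f0 (u,e) = some (v,!e)) (!e₀)]
    have h1 : (spinAdjust f0 σ (u, σ u) = some (v, !(σ u))) ↔ (f0 (u, !e₀) = some (v, !(!e₀))) := by
      rw [spinAdjust_rowA h σ, ← he₀, Bool.not_not]
      constructor
      · intro hm
        rcases Option.map_eq_some_iff.mp hm with ⟨⟨v₀, d⟩, hm1, hm2⟩
        rw [Prod.ext_iff] at hm2
        obtain ⟨hm2a, hm2b⟩ := hm2
        simp only at hm2a hm2b
        by_cases hd : d = !e₀
        · rw [if_pos hd] at hm2b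
          exact absurd hm2b (by cases σ u <;> decide)
        · have hd' : d = e₀ := by revert hd; cases d <;> cases e₀ <;> decide
          rw [hd'] at hm1
          rw [hm1, hm2a]
      · intro h1
        rw [h1]
        have h6 : (e₀ = !e₀) = False := by cases e₀ <;> decide
        simp [h6]
    have h2 : ¬ (spinAdjust f0 σ (u, !(σ u)) = some (v, !(!(σ u)))) := by
      rw [spinAdjust_rowB h σ]
      intro hm
      exact huv (congrArg Prod.fst (Option.some_injective _ hm))
    have h3 : ¬ (f0 (u, !(!e₀)) = some (v, !(!(!e₀)))) := by
      rw [Bool.not_not, hch]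
      intro hm
      exact huv (congrArg Prod.fst (Option.some_injective _ hm))
    rw [if_neg h2, add_zero, if_neg h3, add_zero]
    exact if_congr h1 rfl rfl
  · have hrows : ∀ e : Bool, spinAdjust f0 σ (u, e) = f0 (u, e) :=
      fun e => spinAdjust_row_of_not h e
    apply congrArg Finset.card
    apply Finset.filter_congr
    intro e _
    rw [hrows e]

end SpinAdjust


noncomputable section SpinDet
open Finset Matrix MvPolynomial

variable {U : Type*} [Fintype U]

lemma Wm_eq_X {A : U → U → Prop} (hA : ∀ u, ¬ A u u) {p q : U × Bool}
    (h : strongArc A p q) : Wm A p q = MvPolynomial.X (arcvar p q) := by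
  rcases h with h | ⟨h1, h2⟩
  · have hne : p.1 ≠ q.1 := fun he => hA q.1 (he ▸ h)
    by_cases h2 : p.2 = q.2 <;> simp [Wm, arcvar, hne, h, h2]
  · simp [Wm, arcvar, h1, h2]

lemma Wm_eq_zero {A : U → U → Prop} {p q : U × Bool} (h : ¬ strongArc A p q) :
    Wm A p q = 0 := by
  rw [strongArc] at h
  push_neg at h
  obtain ⟨ha, hbc⟩ := h
  by_cases h1 : p.1 = q.1
  · simp [Wm, h1, hbc h1]
  · simp [Wm, h1, ha]

lemma prod_monomial {ι : Type*} (s : Finset ι) (d : ι → (SVar U →₀ ℕ)) :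
    (∏ i ∈ s, (monomial (d i) (1:ℚ) : SR U)) = monomial (∑ i ∈ s, d i) 1 := by
  classical
  induction s using Finset.cons_induction with
  | empty => simp
  | cons a s ha ih =>
      rw [Finset.prod_cons, Finset.sum_cons, ih, MvPolynomial.monomial_mul, one_mul]

lemma det_Mm_eq_sum {A : U → U → Prop} (hA : ∀ u, ¬ A u u) :
    (Mm A).det = ∑ f ∈ univ.filter (fun f : U × Bool → Option (U × Bool) =>
        IsRootedForest (strongArc A) f), (monomial (nuF f) (1:ℚ) : SR U) := by
  have h0 : (Mm A).det = ∑ f ∈ univ.filter (fun f : U × Bool → Option (U × Bool) => Acyc f),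
      ∏ p, (f p).elim 1 (Wm A p) := det_forest_expansion (fun p q => Wm A p q)
  rw [h0]
  have hsplit : ∀ f : U × Bool → Option (U × Bool),
      (∏ p, (f p).elim 1 (Wm A p))
        = if (∀ p q, f p = some q → strongArc A p q)
            then (monomial (nuF f) (1:ℚ) : SR U) else 0 := by
    intro f
    by_cases hl : ∀ p q, f p = some q → strongArc A p q
    · rw [if_pos hl]
      have hper : ∀ p : U × Bool, (f p).elim 1 (Wm A p)
          = (monomial ((f p).elim 0 (fun q => Finsupp.single (arcvar p q) 1)) (1:ℚ) : SR U) := by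
        intro p
        cases hfp : f p with
        | none => simp
        | some q =>
            simp only [Option.elim]
            rw [Wm_eq_X hA (hl p q hfp)]
            rfl
      rw [Finset.prod_congr rfl (fun p _ => hper p), prod_monomial]
      rfl
    · rw [if_neg hl]
      push_neg at hl
      obtain ⟨p, q, hpq, hns⟩ := hl
      apply Finset.prod_eq_zero (Finset.mem_univ p)
      rw [hpq]
      simpa using Wm_eq_zero hns
  rw [Finset.sum_congr rfl (fun f _ => hsplit f)]
  rw [Finset.sum_ite, Finset.sum_const_zero, add_zero]
  apply Finset.sum_congr ?_ (fun _ _ => rfl)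
  ext f
  simp only [Finset.mem_filter, Finset.mem_univ, true_and]
  simp only [IsRootedForest, Acyc, pstep]
  tauto

lemma coeff_det_Mm {A : U → U → Prop} (hA : ∀ u, ¬ A u u) (m : SVar U →₀ ℕ) :
    MvPolynomial.coeff m ((Mm A).det)
      = (((univ.filter (fun f : U × Bool → Option (U × Bool) =>
            IsRootedForest (strongArc A) f)).filter (fun f => nuF f = m)).card : ℚ) := by
  rw [det_Mm_eq_sum hA, MvPolynomial.coeff_sum]
  rw [← Finset.sum_boole]
  apply Finset.sum_congr rfl
  intro f _
  rw [MvPolynomial.coeff_monomial]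

lemma zswap_mapDomain {A : U → U → Prop} {f0 : U × Bool → Option (U × Bool)}
    (hf0 : IsRootedForest (strongArc A) f0) (σ τ : U → Bool) :
    Finsupp.mapDomain (zswapFun (fun u => xor (σ u) (τ u))) (nuF (spinAdjust f0 σ))
      = nuF (spinAdjust f0 τ) := by
  set c : U → Bool := fun u => xor (σ u) (τ u) with hc
  have hsymm : ∀ w : SVar U,
      Finsupp.mapDomain (zswapFun c) (nuF (spinAdjust f0 σ)) w
        = nuF (spinAdjust f0 σ) (zswapFun c w) := by
    intro w
    have : Finsupp.mapDomain ((zswapFun_invol c).toPerm : SVar U ≃ SVar U)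
        (nuF (spinAdjust f0 σ)) w
        = nuF (spinAdjust f0 σ) (((zswapFun_invol c).toPerm : SVar U ≃ SVar U).symm w) :=
      Finsupp.mapDomain_equiv_apply _ _
    exact this
  apply Finsupp.ext
  intro w
  rw [hsymm w]
  rcases w with ⟨u, v⟩ | ⟨u, v⟩ | ⟨u, ε⟩
  · show nuF (spinAdjust f0 σ) (svr u v) = nuF (spinAdjust f0 τ) (svr u v)
    rw [nuF_svr, nuF_svr]
    by_cases huv : u = v
    · subst huv
      rw [Finset.filter_false_of_mem (fun e _ => spinAdjust_no_self hf0 σ (u, e)),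
        Finset.filter_false_of_mem (fun e _ => spinAdjust_no_self hf0 τ (u, e))]
    · rw [spinAdjust_straight hf0 σ u v huv, spinAdjust_straight hf0 τ u v huv]
  · show nuF (spinAdjust f0 σ) (dvr u v) = nuF (spinAdjust f0 τ) (dvr u v)
    by_cases huv : u = v
    · subst huv
      rw [nuF_dvr_self, nuF_dvr_self]
    · rw [nuF_dvr _ _ _ huv, nuF_dvr _ _ _ huv,
        spinAdjust_diag hf0 σ u v huv, spinAdjust_diag hf0 τ u v huv]
  · show nuF (spinAdjust f0 σ) (zvr u (xor (c u) ε)) = nuF (spinAdjust f0 τ) (zvr u ε)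
    rw [nuF_zvr, nuF_zvr]
    have e3 : (σ u = xor (c u) ε) ↔ (τ u = ε) := by
      simp only [hc]
      revert ε
      cases σ u <;> cases τ u <;> decide
    have e1 := spinAdjust_vert hf0 σ u (xor (c u) ε)
    have e2 := spinAdjust_vert hf0 τ u ε
    have e4 : ((∃ e : Bool, f0 (u, e) = some (u, !e)) ∧ σ u = xor (c u) ε)
        ↔ ((∃ e : Bool, f0 (u, e) = some (u, !e)) ∧ τ u = ε) :=
      and_congr_right (fun _ => e3)
    rw [if_congr (e1.trans (e4.trans e2.symm)) rfl rfl]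

lemma class_iff {A : U → U → Prop} {f0 : U × Bool → Option (U × Bool)}
    (hf0 : IsRootedForest (strongArc A) f0) (σ : U → Bool)
    {f : U × Bool → Option (U × Bool)} (hf : IsRootedForest (strongArc A) f) :
    nuF f = nuF (spinAdjust f0 σ)
      ↔ (SameProj f f0 ∧ ∀ u : U, (∃ e : Bool, f0 (u, e) = some (u, !e)) →
          f (u, !(σ u)) = some (u, σ u)) := by
  constructor
  · intro hν
    have hw : ∀ w, nuF f w = nuF (spinAdjust f0 σ) w := fun w => by rw [hν]
    have hzvr : ∀ (u : U) (ε : Bool), (f (u, !ε) = some (u, ε))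
        ↔ ((∃ e : Bool, f0 (u, e) = some (u, !e)) ∧ σ u = ε) := by
      intro u ε
      have h1 := hw (zvr u ε)
      rw [nuF_zvr, nuF_zvr] at h1
      have h2 := spinAdjust_vert hf0 σ u ε
      constructor
      · intro hP
        rw [if_pos hP] at h1
        by_cases hQ : spinAdjust f0 σ (u, !ε) = some (u, ε)
        · exact h2.mp hQ
        · rw [if_neg hQ] at h1; exact absurd h1 one_ne_zero
      · intro hQ
        rw [if_pos (h2.mpr hQ)] at h1
        by_cases hP : f (u, !ε) = some (u, ε)
        · exact hP
        · rw [if_neg hP] at h1; exact absurd h1.symm one_ne_zero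
    refine ⟨⟨?_, ?_, ?_⟩, ?_⟩
    · intro u v huv
      have h1 := hw (svr u v)
      rw [nuF_svr, nuF_svr] at h1
      rw [h1, spinAdjust_straight hf0 σ u v huv]
    · intro u v huv
      have h1 := hw (dvr u v)
      rw [nuF_dvr _ _ _ huv, nuF_dvr _ _ _ huv] at h1
      rw [h1, spinAdjust_diag hf0 σ u v huv]
    · intro u
      constructor
      · rintro ⟨e, he⟩
        have he' : f (u, !(!e)) = some (u, !e) := by rw [Bool.not_not]; exact he
        exact ((hzvr u (!e)).mp he').1
      · intro hS
        refine ⟨!(σ u), ?_⟩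
        have := (hzvr u (σ u)).mpr ⟨hS, rfl⟩
        rw [this]
        rw [Bool.not_not]
    · intro u hS
      exact (hzvr u (σ u)).mpr ⟨hS, rfl⟩
  · rintro ⟨⟨hs, hd, hv⟩, hσ⟩
    apply Finsupp.ext
    intro w
    rcases w with ⟨u, v⟩ | ⟨u, v⟩ | ⟨u, ε⟩
    · show nuF f (svr u v) = nuF (spinAdjust f0 σ) (svr u v)
      rw [nuF_svr, nuF_svr]
      by_cases huv : u = v
      · subst huv
        rw [Finset.filter_false_of_mem (fun e _ => forest_no_self hf (u, e)),
          Finset.filter_false_of_mem (fun e _ => spinAdjust_no_self hf0 σ (u, e))]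
      · rw [hs u v huv, spinAdjust_straight hf0 σ u v huv]
    · show nuF f (dvr u v) = nuF (spinAdjust f0 σ) (dvr u v)
      by_cases huv : u = v
      · subst huv
        rw [nuF_dvr_self, nuF_dvr_self]
      · rw [nuF_dvr _ _ _ huv, nuF_dvr _ _ _ huv, hd u v huv,
          spinAdjust_diag hf0 σ u v huv]
    · show nuF f (zvr u ε) = nuF (spinAdjust f0 σ) (zvr u ε)
      rw [nuF_zvr, nuF_zvr]
      have hQ := spinAdjust_vert hf0 σ u ε
      by_cases hS : ∃ e : Bool, f0 (u, e) = some (u, !e)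
      · by_cases hε : σ u = ε
        · subst hε
          rw [if_pos (hσ u hS), if_pos (hQ.mpr ⟨hS, rfl⟩)]
        · have hf1 : f (u, !(σ u)) = some (u, σ u) := hσ u hS
          have hnot : ¬ (f (u, !ε) = some (u, ε)) := by
            intro hcon
            have hε' : ε = !(σ u) := by revert hε; cases σ u <;> cases ε <;> decide
            rw [hε'] at hcon
            rw [Bool.not_not] at hcon
            exact forest_no_two hf hcon hf1
          rw [if_neg hnot, if_neg (fun hq => hε ((hQ.mp hq).2))]
      · have hnot : ¬ (f (u, !ε) = some (u, ε)) := by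
          intro hcon
          exact hS ((hv u).mp ⟨!ε, by rw [Bool.not_not]; exact hcon⟩)
        rw [if_neg hnot, if_neg (fun hq => hS (hQ.mp hq).1)]

end SpinDet

/-- Spin independence theorem: among the rooted forests of `H = G ⊠ K₂` with the
same `G`-projection as a given rooted forest `f0`, for each prescription
`σ` of the spins of the vertical arcs (at the vertices `u` of `G` where `f0` has a
vertical arc) the number of forests realizing it is the same; i.e. the spins of the
vertical arcs of a uniformly random such forest are independent and uniform. -/
theorem strong_product_spin_independence {U : Type*} [Fintype U]
    (A : U → U → Prop) (hA : ∀ u : U, ¬ A u u)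
    (f0 : U × Bool → Option (U × Bool)) (hf0 : IsRootedForest (strongArc A) f0)
    (σ τ : U → Bool) :
    Nat.card {f : U × Bool → Option (U × Bool) //
        IsRootedForest (strongArc A) f ∧ SameProj f f0 ∧
        ∀ u : U, (∃ e : Bool, f0 (u, e) = some (u, !e)) →
          f (u, !(σ u)) = some (u, σ u)} =
    Nat.card {f : U × Bool → Option (U × Bool) //
        IsRootedForest (strongArc A) f ∧ SameProj f f0 ∧
        ∀ u : U, (∃ e : Bool, f0 (u, e) = some (u, !e)) →
          f (u, !(τ u)) = some (u, τ u)} := by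
  classical
  have key : ∀ ρ : U → Bool,
      ((Finset.univ.filter (fun f : U × Bool → Option (U × Bool) =>
          IsRootedForest (strongArc A) f ∧ SameProj f f0 ∧
          ∀ u : U, (∃ e : Bool, f0 (u, e) = some (u, !e)) →
            f (u, !(ρ u)) = some (u, ρ u))).card : ℚ)
        = MvPolynomial.coeff (nuF (spinAdjust f0 ρ)) ((Mm A).det) := by
    intro ρ
    rw [coeff_det_Mm hA, Finset.filter_filter]
    norm_cast
    apply congrArg Finset.card
    apply Finset.filter_congr
    intro f _
    constructor
    · rintro ⟨hf, hrest⟩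
      exact ⟨hf, (class_iff hf0 ρ hf).mpr hrest⟩
    · rintro ⟨hf, hν⟩
      exact ⟨hf, (class_iff hf0 ρ hf).mp hν⟩
  have hcard : ∀ ρ : U → Bool,
      Nat.card {f : U × Bool → Option (U × Bool) //
        IsRootedForest (strongArc A) f ∧ SameProj f f0 ∧
        ∀ u : U, (∃ e : Bool, f0 (u, e) = some (u, !e)) →
          f (u, !(ρ u)) = some (u, ρ u)}
      = (Finset.univ.filter (fun f : U × Bool → Option (U × Bool) =>
          IsRootedForest (strongArc A) f ∧ SameProj f f0 ∧
          ∀ u : U, (∃ e : Bool, f0 (u, e) = some (u, !e)) →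
            f (u, !(ρ u)) = some (u, ρ u))).card := by
    intro ρ
    rw [Nat.card_eq_fintype_card, Fintype.card_subtype]
  have hπinj : Function.Injective (zswapFun (fun u => xor (σ u) (τ u))) :=
    (zswapFun_invol _).injective
  have h1 : MvPolynomial.coeff (nuF (spinAdjust f0 σ)) ((Mm A).det)
      = MvPolynomial.coeff (nuF (spinAdjust f0 τ)) ((Mm A).det) := by
    have h2 := MvPolynomial.coeff_rename_mapDomain (zswapFun (fun u => xor (σ u) (τ u))) hπinj
      ((Mm A).det) (nuF (spinAdjust f0 σ))
    rw [rename_det_Mm A hA, zswap_mapDomain hf0 σ τ] at h2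
    exact h2.symm
  rw [hcard σ, hcard τ]
  have hfin := (key σ).trans (h1.trans (key τ).symm)
  exact_mod_cast hfin
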